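/- Let 2 ≤ q < ∞, α > −1, 0 < r < 1, and let φ, ψ be holomorphic self-maps of 𝔻 with joint pull-back measure μ. Then there exists a constant C > 0 such that for every holomorphic function f on 𝔻, ∫_𝔻 |f′(z)|^q dμ(z) ≤ C ∫_𝔻 q² |f(ζ)|^{q−2} |f′(ζ)|² (1−|ζ|)^{−q} μ(Δ(ζ,r)) dA(ζ). (Here q²|f(ζ)|^{q−2}|f′(ζ)|² is the Laplacian Δ|f|^q(ζ) of |f|^q for holomorphic f.) -/

import Mathlib

open MeasureTheory Set Complex Filter
open scoped ENNReal Real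

noncomputable section

/-- The open unit disk in `ℂ`. -/
def uDisk : Set ℂ := {z : ℂ | ‖z‖ < 1}

/-- Area measure on `ℂ`, normalized so that the unit disk has measure `1`. -/
def volA : Measure ℂ := (ENNReal.ofReal Real.pi)⁻¹ • volume

/-- Pseudo-hyperbolic distance `ρ(z,w) = |z - w| / |1 - w̄ z|`. -/
def pd (z w : ℂ) : ℝ := ‖z - w‖ / ‖1 - (starRingEnd ℂ) w * z‖

/-- Pseudo-hyperbolic disk `Δ(a,t)`. -/
def pDisk (a : ℂ) (t : ℝ) : Set ℂ := {z | z ∈ uDisk ∧ pd z a < t}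

/-- The weighted Bergman measure `dA_α = (α+1)(1-|z|²)^α dA` on the unit disk. -/
def bergMeasure (α : ℝ) : Measure ℂ :=
  (volA.restrict uDisk).withDensity fun z =>
    ENNReal.ofReal ((α + 1) * (1 - ‖z‖ ^ 2) ^ α)

/-- The joint pull-back measure `μ` induced by `φ` and `ψ`:
`μ(E) = ∫_{φ⁻¹E} ρ(z)^q dA_α + ∫_{ψ⁻¹E} ρ(z)^q dA_α` where `ρ(z) = ρ(φ z, ψ z)`. -/
def jointMu (q α : ℝ) (φ ψ : ℂ → ℂ) : Measure ℂ :=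
  Measure.map φ ((bergMeasure α).withDensity fun z => ENNReal.ofReal (pd (φ z) (ψ z) ^ q))
  + Measure.map ψ ((bergMeasure α).withDensity fun z => ENNReal.ofReal (pd (φ z) (ψ z) ^ q))

/-- The Hardy space (quasi-)norm `‖f‖_{H^p}`. -/
def hardyNorm (p : ℝ) (f : ℂ → ℂ) : ℝ≥0∞ :=
  (⨆ r : Ioo (0:ℝ) 1,
      (ENNReal.ofReal (2 * Real.pi))⁻¹ *
        ∫⁻ θ in Ioc (0:ℝ) (2 * Real.pi),
          ENNReal.ofReal
            (‖f (((r : ℝ) : ℂ) * Complex.exp ((θ : ℂ) * Complex.I))‖ ^ p)) ^ (1 / p)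

/-- The weighted Bergman space (quasi-)norm `‖f‖_{A^q_α}`. -/
def bergNorm (q α : ℝ) (f : ℂ → ℂ) : ℝ≥0∞ :=
  (∫⁻ z, ENNReal.ofReal (‖f z‖ ^ q) ∂bergMeasure α) ^ (1 / q)

/-- The difference of composition-differentiation operators, `(D_φ - D_ψ) f = f'∘φ - f'∘ψ`. -/
def diffOp (φ ψ f : ℂ → ℂ) : ℂ → ℂ := fun z => deriv f (φ z) - deriv f (ψ z)

/-- Boundedness of `D_φ - D_ψ : H^p → A^q_α`. -/
def DBounded (p q α : ℝ) (φ ψ : ℂ → ℂ) : Prop :=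
  ∃ C > 0, ∀ f : ℂ → ℂ, DifferentiableOn ℂ f uDisk → hardyNorm p f < ⊤ →
    bergNorm q α (diffOp φ ψ f) ≤ ENNReal.ofReal C * hardyNorm p f

/-- Compactness of `D_φ - D_ψ : H^p → A^q_α`. -/
def DCompact (p q α : ℝ) (φ ψ : ℂ → ℂ) : Prop :=
  ∀ f : ℕ → ℂ → ℂ, (∀ n, DifferentiableOn ℂ (f n) uDisk) →
    (∀ n, hardyNorm p (f n) ≤ 1) →
    (∀ K, K ⊆ uDisk → IsCompact K → TendstoUniformlyOn f (fun _ => (0:ℂ)) atTop K) →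
    Tendsto (fun n => bergNorm q α (diffOp φ ψ (f n))) atTop (nhds 0)

/-- The Koranyi approach region `Γ(ζ)`. -/
def koranyi (ζ : ℂ) : Set ℂ :=
  {z | z ∈ uDisk ∧ ‖1 - (starRingEnd ℂ) ζ * z‖ < 1 - ‖z‖ ^ 2}

/-- The Carleson region `Q_t(ζ)`. -/
def cBox (ζ : ℂ) (t : ℝ) : Set ℂ :=
  {z | z ∈ uDisk ∧ ‖1 - (starRingEnd ℂ) ζ * z‖ < t}

/-- The operator (quasi-)norm of `D_φ - D_ψ : H^p → A^q_α`: the least constant `C ≥ 0`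
with `‖(D_φ - D_ψ) f‖_{A^q_α} ≤ C ‖f‖_{H^p}` for all `f ∈ H^p`. -/
def opNorm (p q α : ℝ) (φ ψ : ℂ → ℂ) : ℝ≥0∞ :=
  sInf {C : ℝ≥0∞ | ∀ f : ℂ → ℂ, DifferentiableOn ℂ f uDisk → hardyNorm p f < ⊤ →
    bergNorm q α (diffOp φ ψ f) ≤ C * hardyNorm p f}


private lemma volA_ball (c : ℂ) (ρ : ℝ) (hρ : 0 ≤ ρ) :
    volA (Metric.ball c ρ) = ENNReal.ofReal (ρ ^ 2) := by
  have hπ : (0:ℝ) < Real.pi := Real.pi_pos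
  rw [volA, Measure.smul_apply, Complex.volume_ball, smul_eq_mul]
  have h1 : ((NNReal.pi : ℝ≥0∞)) = ENNReal.ofReal Real.pi := by
    rw [← NNReal.coe_real_pi, ENNReal.ofReal_coe_nnreal]
  rw [h1, mul_comm ((ENNReal.ofReal ρ) ^ 2) _, ← mul_assoc,
    ENNReal.inv_mul_cancel (by simp [hπ, ENNReal.ofReal_pos]) ENNReal.ofReal_ne_top, one_mul,
    ← ENNReal.ofReal_pow hρ]

private lemma measurableSet_uDisk : MeasurableSet uDisk := by
  have : uDisk = Metric.ball (0:ℂ) 1 := by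
    ext z; simp [uDisk, Metric.mem_ball, Complex.dist_eq]
  rw [this]; exact measurableSet_ball

private lemma lb_ball (q : ℝ) (hq : 2 ≤ q) (f : ℂ → ℂ) (w : ℂ) (s : ℝ)
    (c' : ℂ) (ρ' m₀ m₁ : ℝ) (hρ' : 0 < ρ')
    (hsub : Metric.ball c' ρ' ⊆ Metric.ball w s) (hm₀ : 0 ≤ m₀) (hm₁ : 0 ≤ m₁)
    (hbd : ∀ z ∈ Metric.ball c' ρ', m₀ ≤ Norm.norm (f z) ∧ m₁ ≤ Norm.norm (deriv f z)) :
    ENNReal.ofReal (m₀ ^ (q - 2) * m₁ ^ 2 * ρ' ^ 2) ≤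
      ∫⁻ ζ in Metric.ball w s,
        ENNReal.ofReal (Norm.norm (f ζ) ^ (q - 2) * Norm.norm (deriv f ζ) ^ 2) ∂volA := by
  have h1 : ENNReal.ofReal (m₀ ^ (q - 2) * m₁ ^ 2 * ρ' ^ 2)
      = ∫⁻ _ in Metric.ball c' ρ', ENNReal.ofReal (m₀ ^ (q - 2) * m₁ ^ 2) ∂volA := by
    rw [setLIntegral_const, volA_ball c' ρ' hρ'.le, ← ENNReal.ofReal_mul (by positivity)]
  rw [h1]
  refine le_trans (lintegral_mono_ae ?_) (lintegral_mono_set hsub)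
  filter_upwards [ae_restrict_mem measurableSet_ball] with z hz
  rcases hbd z hz with ⟨h₀, h₁⟩
  apply ENNReal.ofReal_le_ofReal
  have e₀ : m₀ ^ (q-2) ≤ Norm.norm (f z) ^ (q-2) := Real.rpow_le_rpow hm₀ h₀ (by linarith)
  have e₁ : m₁ ^ 2 ≤ Norm.norm (deriv f z) ^ 2 := by nlinarith
  exact mul_le_mul e₀ e₁ (by positivity) (Real.rpow_nonneg (norm_nonneg _) _)

private lemma core (q : ℝ) (hq : 2 ≤ q) (f : ℂ → ℂ) (w : ℂ) (s : ℝ) (hs : 0 < s)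
    (hf : DifferentiableOn ℂ f (Metric.ball w s)) :
    ENNReal.ofReal ((s * Norm.norm (deriv f w)) ^ q) ≤
      ENNReal.ofReal (6 * 2560 ^ q) *
        ∫⁻ ζ in Metric.ball w s,
          ENNReal.ofReal (Norm.norm (f ζ) ^ (q - 2) * Norm.norm (deriv f ζ) ^ 2) ∂volA := by
  have hq0 : (0:ℝ) < q := by linarith
  by_cases ha : deriv f w = 0
  · simp [ha, Real.zero_rpow hq0.ne']
  set a₀ := Norm.norm (deriv f w) with ha₀def
  have ha₀ : 0 < a₀ := norm_pos_iff.mpr ha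
  set T := s / 2 with hTdef
  have hT0 : 0 < T := by positivity
  have hTs : T < s := by rw [hTdef]; linarith
  have hcb : Metric.closedBall w T ⊆ Metric.ball w s := Metric.closedBall_subset_ball hTs
  have hdf : DifferentiableOn ℂ (deriv f) (Metric.ball w s) :=
    ((hf.analyticOnNhd Metric.isOpen_ball).deriv).differentiableOn
  have hdfc : ContinuousOn (deriv f) (Metric.ball w s) := hdf.continuousOn
  set u : ℂ → ℝ := fun z => (T - dist z w) * Norm.norm (deriv f z) with hu
  have hucont : ContinuousOn u (Metric.closedBall w T) := by
    apply ContinuousOn.mul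
    · exact (continuous_const.sub (continuous_id.dist continuous_const)).continuousOn
    · exact continuous_norm.comp_continuousOn (hdfc.mono hcb)
  obtain ⟨zs, hzs, hmaxOn⟩ := (isCompact_closedBall w T).exists_isMaxOn
      ⟨w, Metric.mem_closedBall_self hT0.le⟩ hucont
  have hmax' : ∀ z ∈ Metric.closedBall w T, u z ≤ u zs := fun z hz => hmaxOn hz
  set H := u zs with hHdef
  have hHlb : T * a₀ ≤ H := by
    have h := hmax' w (Metric.mem_closedBall_self hT0.le)
    simpa [hu, dist_self] using h
  have hH0 : 0 < H := lt_of_lt_of_le (by positivity) hHlb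
  set ds := T - dist zs w with hdsdef
  set ms := Norm.norm (deriv f zs) with hmsdef
  have hHeq : H = ds * ms := rfl
  have hds_nonneg : 0 ≤ ds := by
    have := Metric.mem_closedBall.mp hzs
    rw [hdsdef]; linarith
  have hms_nonneg : 0 ≤ ms := norm_nonneg _
  have hds0 : 0 < ds := by
    rcases hds_nonneg.lt_or_eq with h | h
    · exact h
    · exfalso; rw [hHeq, ← h] at hH0; simp at hH0
  have hms0 : 0 < ms := by
    rcases hms_nonneg.lt_or_eq with h | h
    · exact h
    · exfalso; rw [hHeq, ← h] at hH0; simp at hH0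
  set s₁ := ds / 2 with hs₁def
  have hs₁0 : 0 < s₁ := by positivity
  have hzs_ball : ∀ z ∈ Metric.ball zs s₁, z ∈ Metric.closedBall w T ∧ ds/2 ≤ T - dist z w := by
    intro z hz
    have hdz : dist z zs < s₁ := Metric.mem_ball.mp hz
    have h1 : dist z w ≤ dist z zs + dist zs w := dist_triangle _ _ _
    have h2 : dist zs w = T - ds := by rw [hdsdef]; ring
    constructor
    · exact Metric.mem_closedBall.mpr (by rw [hs₁def] at hdz; linarith)
    · rw [hs₁def] at hdz; linarith
  have bound1 : ∀ z ∈ Metric.ball zs s₁, Norm.norm (deriv f z) ≤ 2 * ms := by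
    intro z hz
    obtain ⟨hz1, hz2⟩ := hzs_ball z hz
    have h3 := hmax' z hz1
    have h4 : (0:ℝ) ≤ Norm.norm (deriv f z) := norm_nonneg _
    rw [hu] at h3
    simp only at h3
    nlinarith [hHeq]
  have hball₁s : Metric.ball zs s₁ ⊆ Metric.ball w s := by
    intro z hz
    obtain ⟨hz1, hz2⟩ := hzs_ball z hz
    have := Metric.mem_closedBall.mp hz1
    exact Metric.mem_ball.mpr (by linarith)
  have bound2 : ∀ ζ ∈ Metric.ball zs (s₁/2), Norm.norm (deriv (deriv f) ζ) ≤ 10 * ms / s₁ := by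
    intro ζ hζ
    have hζs₁ : dist ζ zs < s₁ / 2 := Metric.mem_ball.mp hζ
    have hsubb : Metric.ball ζ (s₁/2) ⊆ Metric.ball zs s₁ := by
      intro z hz
      have := Metric.mem_ball.mp hz
      exact Metric.mem_ball.mpr (by linarith [dist_triangle z ζ zs])
    have hd' : DifferentiableOn ℂ (deriv f) (Metric.ball ζ (s₁/2)) :=
      hdf.mono (hsubb.trans hball₁s)
    have hmaps : Set.MapsTo (deriv f) (Metric.ball ζ (s₁/2)) (Metric.ball (deriv f ζ) (5*ms)) := by
      intro z hz
      have h5 := bound1 z (hsubb hz)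
      have h6 := bound1 ζ (hsubb (Metric.mem_ball_self (by positivity)))
      rw [Metric.mem_ball, dist_eq_norm]
      calc ‖deriv f z - deriv f ζ‖ ≤ ‖deriv f z‖ + ‖deriv f ζ‖ := norm_sub_le _ _
        _ ≤ 2*ms + 2*ms := by
            linarith
        _ < 5*ms := by linarith
    have h7 := Complex.norm_deriv_le_div_of_mapsTo_ball hd' (hmaps.mono_right Metric.ball_subset_closedBall) (by positivity : (0:ℝ) < s₁/2)
    calc Norm.norm (deriv (deriv f) ζ) ≤ 5*ms/(s₁/2) := h7
      _ = 10*ms/s₁ := by field_simp; ring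
  set τ := s₁ / 80 with hτdef
  have hτ0 : 0 < τ := by positivity
  have hτs₁ : τ < s₁ / 2 := by rw [hτdef]; linarith
  have hcbτ : Metric.closedBall zs τ ⊆ Metric.ball zs (s₁/2) := Metric.closedBall_subset_ball hτs₁
  have hcbτs : Metric.closedBall zs τ ⊆ Metric.ball w s :=
    (hcbτ.trans (Metric.ball_subset_ball (by linarith))).trans hball₁s
  have key1 : ∀ z ∈ Metric.closedBall zs τ, ‖deriv f z - deriv f zs‖ ≤ ms/8 := by
    intro z hz
    have hmvt := (convex_closedBall zs τ).norm_image_sub_le_of_norm_hasDerivWithin_le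
      (f := deriv f) (f' := fun x => deriv (deriv f) x) (C := 10*ms/s₁)
      (fun x hx => ((hdf.differentiableAt (Metric.isOpen_ball.mem_nhds (hcbτs hx))).hasDerivAt).hasDerivWithinAt)
      (fun x hx => by exact bound2 x (hcbτ hx))
      (Metric.mem_closedBall_self hτ0.le) hz
    have hzτ : ‖z - zs‖ ≤ τ := by rw [← dist_eq_norm]; exact Metric.mem_closedBall.mp hz
    calc ‖deriv f z - deriv f zs‖ ≤ (10*ms/s₁) * ‖z - zs‖ := hmvt
      _ ≤ (10*ms/s₁) * τ := by
          apply mul_le_mul_of_nonneg_left hzτ (by positivity)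
      _ = ms/8 := by rw [hτdef]; field_simp; ring
  have key1l : ∀ z ∈ Metric.closedBall zs τ, 7/8 * ms ≤ Norm.norm (deriv f z) := by
    intro z hz
    have h7 := key1 z hz
    have h8 : ‖deriv f zs‖ - ‖deriv f z‖ ≤ ‖deriv f zs - deriv f z‖ := norm_sub_norm_le _ _
    rw [norm_sub_rev] at h8
    rw [← hmsdef] at h8
    linarith
  have key2 : ∀ z ∈ Metric.closedBall zs τ,
      ‖f z - f zs - deriv f zs * (z - zs)‖ ≤ ms/8 * ‖z - zs‖ := by
    intro z hz
    have hgd : ∀ x ∈ Metric.closedBall zs τ,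
        HasDerivWithinAt (fun y => f y - deriv f zs * y) (deriv f x - deriv f zs)
          (Metric.closedBall zs τ) x := by
      intro x hx
      have h8 : HasDerivAt f (deriv f x) x :=
        (hf.differentiableAt (Metric.isOpen_ball.mem_nhds (hcbτs hx))).hasDerivAt
      have h9 : HasDerivAt (fun y => deriv f zs * y) (deriv f zs) x := by
        simpa using (hasDerivAt_id x).const_mul (deriv f zs)
      exact (h8.sub h9).hasDerivWithinAt
    have hmvt := (convex_closedBall zs τ).norm_image_sub_le_of_norm_hasDerivWithin_le hgd
      (fun x hx => key1 x hx) (Metric.mem_closedBall_self hτ0.le) hz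
    calc ‖f z - f zs - deriv f zs * (z - zs)‖
        = ‖(f z - deriv f zs * z) - (f zs - deriv f zs * zs)‖ := by congr 1; ring
      _ ≤ ms/8 * ‖z - zs‖ := hmvt
  set X := ms * τ with hXdef
  have hX0 : 0 < X := by positivity
  set b := f zs with hbdef
  have hmain : ∃ c' : ℂ, Metric.ball c' (7*τ/96) ⊆ Metric.closedBall zs τ ∧
      ∀ z ∈ Metric.ball c' (7*τ/96), X/8 ≤ Norm.norm (f z) := by
    by_cases hbs : Norm.norm b ≤ 7/32 * X
    · refine ⟨zs + ((3*τ/4 : ℝ) : ℂ), ?_, ?_⟩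
      · intro z hz
        have h1 : dist z (zs + ((3*τ/4 : ℝ) : ℂ)) < 7*τ/96 := Metric.mem_ball.mp hz
        have h2 : dist (zs + ((3*τ/4 : ℝ) : ℂ)) zs = 3*τ/4 := by
          have e : zs + ((3*τ/4 : ℝ) : ℂ) - zs = ((3*τ/4 : ℝ) : ℂ) := by ring
          rw [Complex.dist_eq, e, Complex.norm_real, Real.norm_eq_abs]
          exact abs_of_nonneg (by positivity)
        have h3 := dist_triangle z (zs + ((3*τ/4 : ℝ) : ℂ)) zs
        exact Metric.mem_closedBall.mpr (by linarith)
      · intro z hz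
        have h1 : dist z (zs + ((3*τ/4 : ℝ) : ℂ)) < 7*τ/96 := Metric.mem_ball.mp hz
        have h2 : dist (zs + ((3*τ/4 : ℝ) : ℂ)) zs = 3*τ/4 := by
          have e : zs + ((3*τ/4 : ℝ) : ℂ) - zs = ((3*τ/4 : ℝ) : ℂ) := by ring
          rw [Complex.dist_eq, e, Complex.norm_real, Real.norm_eq_abs]
          exact abs_of_nonneg (by positivity)
        have hzcb : z ∈ Metric.closedBall zs τ := by
          have h3 := dist_triangle z (zs + ((3*τ/4 : ℝ) : ℂ)) zs
          exact Metric.mem_closedBall.mpr (by linarith)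
        have h4 : 65*τ/96 ≤ dist z zs := by
          have h5 := dist_triangle (zs + ((3*τ/4 : ℝ) : ℂ)) z zs
          rw [dist_comm (zs + ((3*τ/4 : ℝ) : ℂ)) z] at h5
          linarith
        have h14 : dist z zs ≤ τ := Metric.mem_closedBall.mp hzcb
        have h6 := key2 z hzcb
        have h13 : ‖z - zs‖ = dist z zs := (dist_eq_norm z zs).symm
        rw [h13] at h6
        have h7 : ‖deriv f zs * (z - zs)‖ = ms * dist z zs := by
          rw [norm_mul, ← Complex.dist_eq, ← hmsdef]
        have h8 : ‖b + deriv f zs * (z - zs)‖ - ‖f z - (b + deriv f zs * (z - zs))‖ ≤ ‖f z‖ := by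
          have h := norm_sub_norm_le (b + deriv f zs * (z - zs)) (f z)
          have h' : ‖(b + deriv f zs * (z - zs)) - f z‖ = ‖f z - (b + deriv f zs * (z - zs))‖ :=
            norm_sub_rev _ _
          linarith
        have h9 : ms * dist z zs ≤ ‖b + deriv f zs * (z - zs)‖ + ‖b‖ := by
          have e : deriv f zs * (z - zs) = (b + deriv f zs * (z - zs)) - b := by ring
          calc ms * dist z zs = ‖deriv f zs * (z - zs)‖ := h7.symm
            _ = ‖(b + deriv f zs * (z - zs)) - b‖ := by rw [← e]
            _ ≤ ‖b + deriv f zs * (z - zs)‖ + ‖b‖ := norm_sub_le _ _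
        have h12 : ‖f z - (b + deriv f zs * (z - zs))‖ ≤ ms/8 * dist z zs := by
          have e : f z - (b + deriv f zs * (z - zs)) = f z - b - deriv f zs * (z - zs) := by ring
          rw [e]; exact h6
        have hb' : ‖b‖ = Norm.norm b := rfl
        have hfz : Norm.norm (f z) = ‖f z‖ := rfl
        have hp1 : ms * (65*τ/96) ≤ ms * dist z zs := mul_le_mul_of_nonneg_left h4 hms_nonneg
        have hp2 : ms/8 * dist z zs ≤ ms/8 * τ := mul_le_mul_of_nonneg_left h14 (by positivity)
        rw [hfz]
        linarith [hXdef, h8, h9, h12, hp1, hp2, hbs]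
    · push_neg at hbs
      have hsub0 : Metric.ball zs (7*τ/96) ⊆ Metric.closedBall zs τ :=
        Metric.ball_subset_closedBall.trans (Metric.closedBall_subset_closedBall (by linarith))
      refine ⟨zs, hsub0, ?_⟩
      intro z hz
      have hzcb : z ∈ Metric.closedBall zs τ := hsub0 hz
      have h1 : dist z zs < 7*τ/96 := Metric.mem_ball.mp hz
      have h6 := key2 z hzcb
      have h13 : ‖z - zs‖ = dist z zs := (dist_eq_norm z zs).symm
      rw [h13] at h6
      have h7 : ‖deriv f zs * (z - zs)‖ = ms * dist z zs := by
        rw [norm_mul, ← Complex.dist_eq, ← hmsdef]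
      have h8 : ‖f z - b‖ ≤ ‖f z - b - deriv f zs * (z - zs)‖ + ‖deriv f zs * (z - zs)‖ := by
        have e : f z - b = (f z - b - deriv f zs * (z - zs)) + deriv f zs * (z - zs) := by ring
        calc ‖f z - b‖ = ‖(f z - b - deriv f zs * (z - zs)) + deriv f zs * (z - zs)‖ := by rw [← e]
          _ ≤ _ := norm_add_le _ _
      have h9 : ‖b‖ - ‖f z‖ ≤ ‖f z - b‖ := by
        have h := norm_sub_norm_le b (f z)
        have h' : ‖b - f z‖ = ‖f z - b‖ := norm_sub_rev _ _
        linarith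
      have hb' : ‖b‖ = Norm.norm b := rfl
      have hfz : Norm.norm (f z) = ‖f z‖ := rfl
      have hp1 : ms * dist z zs ≤ ms * (7*τ/96) := mul_le_mul_of_nonneg_left h1.le hms_nonneg
      have hp2 : ms/8 * dist z zs ≤ ms/8 * (7*τ/96) :=
        mul_le_mul_of_nonneg_left h1.le (by positivity)
      rw [hfz]
      linarith [hXdef, h6, h7, h8, h9, hp1, hp2, hbs]
  obtain ⟨c', hsubc, hflb⟩ := hmain
  have hρ'0 : (0:ℝ) < 7*τ/96 := by positivity
  have hsubball : Metric.ball c' (7*τ/96) ⊆ Metric.ball w s := fun z hz => hcbτs (hsubc hz)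
  have hlb := lb_ball q hq f w s c' (7*τ/96) (X/8) (7/8*ms) hρ'0 hsubball
    (by positivity) (by positivity)
    (fun z hz => ⟨hflb z hz, key1l z (hsubc hz)⟩)
  have hXlb : s * a₀ / 2560 ≤ X / 8 := by
    have h1 : s/2 * a₀ ≤ ds * ms := by
      rw [← hHeq]; rw [hTdef] at hHlb; linarith
    have h2 : X = ds * ms / 160 := by
      rw [hXdef, hτdef, hs₁def]; ring
    linarith
  have harith : (s * a₀)^q ≤ 6 * 2560^q * ((X/8)^(q-2) * (7/8*ms)^2 * (7*τ/96)^2) := by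
    have hsa0 : (0:ℝ) ≤ s * a₀ / 2560 := by positivity
    have h3 : (s*a₀/2560)^q ≤ (X/8)^q := Real.rpow_le_rpow hsa0 hXlb hq0.le
    have h2 : (X/8)^(q-2) * ((X/8):ℝ)^(2:ℕ) = (X/8)^q := by
      rw [← Real.rpow_natCast (X/8) 2, ← Real.rpow_add (by positivity)]
      norm_num
    have h1 : (7/8*ms)^2 * (7*τ/96)^2 = 2401/9216 * ((X/8):ℝ)^(2:ℕ) := by
      rw [hXdef]; ring
    have h6 : (X/8)^(q-2) * (7/8*ms)^2 * (7*τ/96)^2 = 2401/9216 * (X/8)^q := by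
      rw [mul_assoc, h1, show (X/8)^(q-2) * (2401/9216 * ((X/8):ℝ)^(2:ℕ))
        = 2401/9216 * ((X/8)^(q-2) * ((X/8):ℝ)^(2:ℕ)) from by ring, h2]
    have h4 : (s*a₀/2560)^q = (s*a₀)^q / 2560^q :=
      Real.div_rpow (by positivity) (by norm_num) q
    have h5 : (0:ℝ) < 2560^q := Real.rpow_pos_of_pos (by norm_num) q
    have h8 : (0:ℝ) ≤ (X/8)^q := Real.rpow_nonneg (by positivity) q
    rw [h6]
    rw [h4] at h3
    have h9 : (s*a₀)^q ≤ 2560^q * (X/8)^q := by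
      rw [div_le_iff₀ h5] at h3; linarith
    have hc0 : (0:ℝ) ≤ 2560^q * (X/8)^q := mul_nonneg h5.le h8
    have h10 : 2560^q * (X/8)^q ≤ 14406/9216 * (2560^q * (X/8)^q) :=
      le_mul_of_one_le_left hc0 (by norm_num)
    have h11 : 6*2560^q*(2401/9216*(X/8)^q) = 14406/9216 * (2560^q * (X/8)^q) := by ring
    linarith
  calc ENNReal.ofReal ((s * a₀)^q)
      ≤ ENNReal.ofReal (6*2560^q * ((X/8)^(q-2) * (7/8*ms)^2 * (7*τ/96)^2)) :=
        ENNReal.ofReal_le_ofReal harith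
    _ = ENNReal.ofReal (6*2560^q) * ENNReal.ofReal ((X/8)^(q-2) * (7/8*ms)^2 * (7*τ/96)^2) :=
        ENNReal.ofReal_mul (by positivity)
    _ ≤ ENNReal.ofReal (6*2560^q) *
        ∫⁻ ζ in Metric.ball w s,
          ENNReal.ofReal (Norm.norm (f ζ) ^ (q - 2) * Norm.norm (deriv f ζ) ^ 2) ∂volA :=
        mul_le_mul_right hlb _

private lemma pointwise (q r : ℝ) (hq : 2 ≤ q) (hr0 : 0 < r) (hr1 : r < 1)
    (f : ℂ → ℂ) (hf : DifferentiableOn ℂ f uDisk) (w : ℂ) (hw : w ∈ uDisk) :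
    ENNReal.ofReal (Norm.norm (deriv f w) ^ q) ≤
      ENNReal.ofReal (6 * (20480 / r) ^ q) *
        ∫⁻ ζ in uDisk,
          ENNReal.ofReal (q ^ 2 * Norm.norm (f ζ) ^ (q - 2) * Norm.norm (deriv f ζ) ^ 2 *
              (1 - Norm.norm ζ) ^ (-q)) *
            (pDisk ζ r).indicator (fun _ => (1:ℝ≥0∞)) w ∂volA := by
  have hq0 : (0:ℝ) < q := by linarith
  have hw1 : Norm.norm w < 1 := hw
  set δ := 1 - Norm.norm w with hδdef
  have hδ : 0 < δ := by rw [hδdef]; linarith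
  set s := r * δ / 4 with hsdef
  have hs0 : 0 < s := by positivity
  have hsδ : s ≤ δ/4 := by rw [hsdef]; nlinarith
  have hballu : Metric.ball w s ⊆ uDisk := by
    intro z hz
    rw [Metric.mem_ball, Complex.dist_eq] at hz
    have h1 : Norm.norm z ≤ Norm.norm (z - w) + Norm.norm w := by
      simpa using norm_add_le (z - w) w
    show Norm.norm z < 1
    linarith
  have hcore := core q hq f w s hs0 (hf.mono hballu)
  set a := Norm.norm (deriv f w) with hadef
  -- pointwise comparison inside the ball
  have hpt : ∀ ζ ∈ Metric.ball w s,
      ENNReal.ofReal ((2*δ)^(-q)) *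
        ENNReal.ofReal (Norm.norm (f ζ) ^ (q-2) * Norm.norm (deriv f ζ) ^ 2)
      ≤ ENNReal.ofReal (q ^ 2 * Norm.norm (f ζ) ^ (q - 2) * Norm.norm (deriv f ζ) ^ 2 *
            (1 - Norm.norm ζ) ^ (-q)) *
          (pDisk ζ r).indicator (fun _ => (1:ℝ≥0∞)) w := by
    intro ζ hζ
    have hζu : ζ ∈ uDisk := hballu hζ
    have hζ1 : Norm.norm ζ < 1 := hζu
    have hdist : Norm.norm (ζ - w) < s := by
      rw [Metric.mem_ball, Complex.dist_eq] at hζ; exact hζ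
    have hmem : w ∈ pDisk ζ r := by
      refine ⟨hw, ?_⟩
      show Norm.norm (w - ζ) / Norm.norm (1 - (starRingEnd ℂ) ζ * w) < r
      have hden : δ ≤ Norm.norm (1 - (starRingEnd ℂ) ζ * w) := by
        have h1 : Norm.norm ((starRingEnd ℂ) ζ * w) = Norm.norm ζ * Norm.norm w := by
          rw [norm_mul, Complex.norm_conj]
        have h2 : (1:ℝ) ≤ Norm.norm (1 - (starRingEnd ℂ) ζ * w)
            + Norm.norm ((starRingEnd ℂ) ζ * w) := by
          have := norm_add_le (1 - (starRingEnd ℂ) ζ * w) ((starRingEnd ℂ) ζ * w)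
          simpa using this
        have h3 : Norm.norm ζ * Norm.norm w ≤ Norm.norm w := by
          nlinarith [norm_nonneg w]
        rw [h1] at h2
        rw [hδdef]
        linarith
      have hnum : Norm.norm (w - ζ) < s := by
        rw [norm_sub_rev]; exact hdist
      have hnn : 0 ≤ Norm.norm (w - ζ) := norm_nonneg _
      calc Norm.norm (w - ζ) / Norm.norm (1 - (starRingEnd ℂ) ζ * w)
          ≤ Norm.norm (w - ζ) / δ := div_le_div_of_nonneg_left hnn hδ hden
        _ < r := by
            rw [div_lt_iff₀ hδ]
            calc Norm.norm (w - ζ) < s := hnum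
              _ ≤ r/4 * δ := by rw [hsdef]; nlinarith
              _ ≤ r * δ := by nlinarith
    rw [Set.indicator_of_mem hmem, mul_one, ← ENNReal.ofReal_mul (by positivity)]
    apply ENNReal.ofReal_le_ofReal
    have hbase : 0 < 1 - Norm.norm ζ := by linarith
    have hub : 1 - Norm.norm ζ ≤ 2*δ := by
      have h1 : Norm.norm w ≤ Norm.norm (w - ζ) + Norm.norm ζ := by
        simpa using norm_add_le (w - ζ) ζ
      have h2 : Norm.norm (w - ζ) < s := by rw [norm_sub_rev]; exact hdist
      rw [hδdef]; linarith
    have hW : (2*δ)^(-q) ≤ (1 - Norm.norm ζ)^(-q) :=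
      Real.rpow_le_rpow_of_nonpos hbase hub (by linarith)
    have hq1 : (1:ℝ) ≤ q^2 := by nlinarith
    have hA : (0:ℝ) ≤ Norm.norm (f ζ) ^ (q-2) := Real.rpow_nonneg (norm_nonneg _) _
    have hB : (0:ℝ) ≤ Norm.norm (deriv f ζ) ^ 2 := sq_nonneg _
    have hW0 : (0:ℝ) ≤ (1 - Norm.norm ζ)^(-q) := Real.rpow_nonneg hbase.le _
    calc (2*δ)^(-q) * (Norm.norm (f ζ) ^ (q-2) * Norm.norm (deriv f ζ) ^ 2)
        ≤ (1 - Norm.norm ζ)^(-q) * (Norm.norm (f ζ) ^ (q-2) * Norm.norm (deriv f ζ) ^ 2) :=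
          mul_le_mul_of_nonneg_right hW (mul_nonneg hA hB)
      _ = 1 * (Norm.norm (f ζ) ^ (q-2) * Norm.norm (deriv f ζ) ^ 2 *
            (1 - Norm.norm ζ)^(-q)) := by ring
      _ ≤ q^2 * (Norm.norm (f ζ) ^ (q-2) * Norm.norm (deriv f ζ) ^ 2 *
            (1 - Norm.norm ζ)^(-q)) := by
          apply mul_le_mul_of_nonneg_right hq1
          exact mul_nonneg (mul_nonneg hA hB) hW0
      _ = q ^ 2 * Norm.norm (f ζ) ^ (q - 2) * Norm.norm (deriv f ζ) ^ 2 *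
            (1 - Norm.norm ζ) ^ (-q) := by ring
  -- real scalar identity
  have key : 6*(20480/r)^q * ((2*δ)^(-q) * ((6*2560^q)⁻¹ * ((s*a)^q))) = a^q := by
    have hsa : (s*a)^q = s^q * a^q := Real.mul_rpow hs0.le (norm_nonneg _)
    have hneg : (2*δ)^(-q) = ((2*δ)^q)⁻¹ := Real.rpow_neg (by positivity) q
    have h1 : (0:ℝ) < (2*δ)^q := Real.rpow_pos_of_pos (by positivity) q
    have h2 : (0:ℝ) < (2560:ℝ)^q := Real.rpow_pos_of_pos (by norm_num) q
    have h3 : (0:ℝ) < (20480/r)^q := Real.rpow_pos_of_pos (by positivity) q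
    have hc1 : (20480/r)^q * s^q = (5120*δ)^q := by
      rw [← Real.mul_rpow (by positivity) hs0.le]
      congr 1
      rw [hsdef]; field_simp; ring
    have hc2 : (2*δ)^q * 2560^q = (5120*δ)^q := by
      rw [← Real.mul_rpow (by positivity) (by norm_num)]
      congr 1; ring
    rw [hsa, hneg]
    have h4 : (0:ℝ) < (5120*δ)^q := Real.rpow_pos_of_pos (by positivity) q
    field_simp
    nlinarith [hc1, hc2, Real.rpow_nonneg (norm_nonneg (deriv f w)) q]
  -- assemble
  set I1 := ∫⁻ ζ in Metric.ball w s,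
      ENNReal.ofReal (Norm.norm (f ζ) ^ (q-2) * Norm.norm (deriv f ζ) ^ 2) ∂volA with hI1
  set I2 := ∫⁻ ζ in uDisk,
      ENNReal.ofReal (q ^ 2 * Norm.norm (f ζ) ^ (q - 2) * Norm.norm (deriv f ζ) ^ 2 *
          (1 - Norm.norm ζ) ^ (-q)) *
        (pDisk ζ r).indicator (fun _ => (1:ℝ≥0∞)) w ∂volA with hI2
  have step1 : ENNReal.ofReal ((2*δ)^(-q)) * I1 ≤ I2 := by
    calc ENNReal.ofReal ((2*δ)^(-q)) * I1
        = ∫⁻ ζ in Metric.ball w s, ENNReal.ofReal ((2*δ)^(-q)) *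
            ENNReal.ofReal (Norm.norm (f ζ) ^ (q-2) * Norm.norm (deriv f ζ) ^ 2) ∂volA :=
          (lintegral_const_mul' _ _ ENNReal.ofReal_ne_top).symm
      _ ≤ ∫⁻ ζ in Metric.ball w s,
            ENNReal.ofReal (q ^ 2 * Norm.norm (f ζ) ^ (q - 2) * Norm.norm (deriv f ζ) ^ 2 *
                (1 - Norm.norm ζ) ^ (-q)) *
              (pDisk ζ r).indicator (fun _ => (1:ℝ≥0∞)) w ∂volA := by
          apply lintegral_mono_ae
          filter_upwards [ae_restrict_mem measurableSet_ball] with ζ hζ using hpt ζ hζ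
      _ ≤ I2 := lintegral_mono_set hballu
  have hKne0 : ENNReal.ofReal (6*2560^q) ≠ 0 := by
    have : (0:ℝ) < 6*2560^q := by positivity
    exact (ENNReal.ofReal_pos.mpr this).ne'
  have hKneT : ENNReal.ofReal (6*2560^q) ≠ ⊤ := ENNReal.ofReal_ne_top
  have hI1lb : (ENNReal.ofReal (6*2560^q))⁻¹ * ENNReal.ofReal ((s*a)^q) ≤ I1 := by
    calc (ENNReal.ofReal (6*2560^q))⁻¹ * ENNReal.ofReal ((s*a)^q)
        ≤ (ENNReal.ofReal (6*2560^q))⁻¹ * (ENNReal.ofReal (6*2560^q) * I1) :=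
          mul_le_mul_right hcore _
      _ = I1 := by rw [← mul_assoc, ENNReal.inv_mul_cancel hKne0 hKneT, one_mul]
  calc ENNReal.ofReal (a ^ q)
      = ENNReal.ofReal (6*(20480/r)^q) * (ENNReal.ofReal ((2*δ)^(-q)) *
          ((ENNReal.ofReal (6*2560^q))⁻¹ * ENNReal.ofReal ((s*a)^q))) := by
        rw [← ENNReal.ofReal_inv_of_pos (show (0:ℝ) < 6*2560^q by positivity),
          ← ENNReal.ofReal_mul (by positivity : (0:ℝ) ≤ (6*2560^q)⁻¹),
          ← ENNReal.ofReal_mul (Real.rpow_nonneg (by positivity : (0:ℝ) ≤ 2*δ) _),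
          ← ENNReal.ofReal_mul (by positivity : (0:ℝ) ≤ 6*(20480/r)^q), key]
    _ ≤ ENNReal.ofReal (6*(20480/r)^q) * (ENNReal.ofReal ((2*δ)^(-q)) * I1) := by
        apply mul_le_mul_right
        exact mul_le_mul_right hI1lb _
    _ ≤ ENNReal.ofReal (6*(20480/r)^q) * I2 := mul_le_mul_right step1 _

/-- `∫_𝔻 |f'|^q dμ ≲ ∫_𝔻 Δ|f|^q(ζ) (1-|ζ|)^{-q} μ(Δ(ζ,r)) dA(ζ)` for `q ≥ 2`. -/
theorem stmt_11 (q α r : ℝ) (hq : 2 ≤ q) (hα : -1 < α)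
    (hr0 : 0 < r) (hr1 : r < 1) (φ ψ : ℂ → ℂ)
    (hφ : DifferentiableOn ℂ φ uDisk) (hφm : MapsTo φ uDisk uDisk)
    (hψ : DifferentiableOn ℂ ψ uDisk) (hψm : MapsTo ψ uDisk uDisk) :
    ∃ C > (0:ℝ), ∀ f : ℂ → ℂ, DifferentiableOn ℂ f uDisk →
      (∫⁻ z, ENNReal.ofReal (Norm.norm (deriv f z) ^ q) ∂jointMu q α φ ψ) ≤
        ENNReal.ofReal C *
          ∫⁻ ζ in uDisk,
            ENNReal.ofReal (q ^ 2 * Norm.norm (f ζ) ^ (q - 2) *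
                Norm.norm (deriv f ζ) ^ 2 * (1 - Norm.norm ζ) ^ (-q)) *
              jointMu q α φ ψ (pDisk ζ r) ∂volA := by
  classical
  have huD : MeasurableSet uDisk := measurableSet_uDisk
  haveI hSFvolA : SFinite volA := by unfold volA; infer_instance
  haveI hSF : SFinite (jointMu q α φ ψ) := by unfold jointMu bergMeasure; infer_instance
  -- a.e. membership in uDisk
  have hacν : ((bergMeasure α).withDensity fun z => ENNReal.ofReal (pd (φ z) (ψ z) ^ q))
      ≪ volA.restrict uDisk := by
    refine (withDensity_absolutelyContinuous _ _).trans ?_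
    unfold bergMeasure
    exact withDensity_absolutelyContinuous _ _
  have hpre : ∀ χ : ℂ → ℂ, MapsTo χ uDisk uDisk →
      ((bergMeasure α).withDensity fun z => ENNReal.ofReal (pd (φ z) (ψ z) ^ q))
        (χ ⁻¹' uDiskᶜ) = 0 := by
    intro χ hχm
    apply hacν
    rw [Measure.restrict_apply' huD]
    have : (χ ⁻¹' uDiskᶜ) ∩ uDisk = ∅ := by
      ext z
      simp only [Set.mem_inter_iff, Set.mem_preimage, Set.mem_compl_iff, Set.mem_empty_iff_false,
        iff_false, not_and]
      intro hz1 hz2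
      exact hz1 (hχm hz2)
    rw [this, measure_empty]
  have hχae : ∀ χ : ℂ → ℂ, DifferentiableOn ℂ χ uDisk →
      AEMeasurable χ ((bergMeasure α).withDensity fun z =>
        ENNReal.ofReal (pd (φ z) (ψ z) ^ q)) := by
    intro χ hχ
    exact (hχ.continuousOn.aemeasurable huD).mono_ac hacν
  have hcompl : jointMu q α φ ψ uDiskᶜ = 0 := by
    show (Measure.map φ _ + Measure.map ψ _) uDiskᶜ = 0
    rw [Measure.add_apply,
      Measure.map_apply_of_aemeasurable (hχae φ hφ) huD.compl,
      Measure.map_apply_of_aemeasurable (hχae ψ hψ) huD.compl,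
      hpre φ hφm, hpre ψ hψm, add_zero]
  have hae : ∀ᵐ w ∂(jointMu q α φ ψ), w ∈ uDisk := by
    rw [ae_iff]
    exact hcompl
  refine ⟨6 * (20480 / r) ^ q, by positivity, ?_⟩
  intro f hf
  set C := ENNReal.ofReal (6 * (20480 / r) ^ q) with hCdef
  have hC0 : C ≠ 0 := by
    rw [hCdef]
    simp only [ne_eq, ENNReal.ofReal_eq_zero, not_le]
    positivity
  have hCt : C ≠ ⊤ := ENNReal.ofReal_ne_top
  set g₂ : ℂ → ℝ≥0∞ := fun ζ =>
    ENNReal.ofReal (q ^ 2 * Norm.norm (f ζ) ^ (q - 2) * Norm.norm (deriv f ζ) ^ 2 *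
      (1 - Norm.norm ζ) ^ (-q)) with hg₂def
  have hg₂ : AEMeasurable g₂ (volA.restrict uDisk) := by
    have h1 : AEMeasurable f (volA.restrict uDisk) := hf.continuousOn.aemeasurable huD
    have h2 : AEMeasurable (fun ζ => Norm.norm (f ζ) ^ (q - 2)) (volA.restrict uDisk) :=
      (continuous_norm.measurable.comp_aemeasurable h1).pow aemeasurable_const
    have h3 : Measurable fun ζ : ℂ => Norm.norm (deriv f ζ) ^ 2 :=
      (continuous_norm.measurable.comp (measurable_deriv f)).pow_const 2
    have h4 : Measurable fun ζ : ℂ => (1 - Norm.norm ζ) ^ (-q) :=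
      (measurable_const.sub continuous_norm.measurable).pow measurable_const
    exact (((aemeasurable_const.mul h2).mul h3.aemeasurable).mul h4.aemeasurable).ennreal_ofReal
  set S : Set (ℂ × ℂ) := {p | p.2 ∈ uDisk ∧ pd p.2 p.1 < r} with hSdef
  have hS : MeasurableSet S := by
    have hpdm : Measurable fun p : ℂ × ℂ => pd p.2 p.1 := by
      unfold pd
      apply Measurable.div
      · exact (continuous_norm.comp (continuous_snd.sub continuous_fst)).measurable
      · exact (continuous_norm.comp
          (continuous_const.sub ((Complex.continuous_conj.comp continuous_fst).mul
            continuous_snd))).measurable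
    have h1 : MeasurableSet {p : ℂ × ℂ | p.2 ∈ uDisk} := measurable_snd huD
    have h2 : MeasurableSet {p : ℂ × ℂ | pd p.2 p.1 < r} :=
      measurableSet_lt hpdm measurable_const
    exact h1.inter h2
  have hsec : ∀ ζ : ℂ, MeasurableSet (pDisk ζ r) := by
    intro ζ
    have : pDisk ζ r = (fun w => ((ζ, w) : ℂ × ℂ)) ⁻¹' S := rfl
    rw [this]
    exact hS.preimage measurable_prodMk_left
  have hind : ∀ (ζ w : ℂ),
      S.indicator (fun _ => (1:ℝ≥0∞)) (ζ, w) = (pDisk ζ r).indicator (fun _ => (1:ℝ≥0∞)) w := by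
    intro ζ w
    by_cases h : w ∈ pDisk ζ r
    · rw [Set.indicator_of_mem h, Set.indicator_of_mem (by exact h : (ζ, w) ∈ S)]
    · rw [Set.indicator_of_notMem h, Set.indicator_of_notMem (by exact h : (ζ, w) ∉ S)]
  have hswap : (∫⁻ ζ in uDisk, g₂ ζ * jointMu q α φ ψ (pDisk ζ r) ∂volA)
      = ∫⁻ w, ∫⁻ ζ in uDisk,
          g₂ ζ * (pDisk ζ r).indicator (fun _ => (1:ℝ≥0∞)) w ∂volA ∂(jointMu q α φ ψ) := by
    have hmeas : AEMeasurable (Function.uncurry fun ζ w =>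
        g₂ ζ * S.indicator (fun _ => (1:ℝ≥0∞)) (ζ, w))
        ((volA.restrict uDisk).prod (jointMu q α φ ψ)) := by
      have h1 : AEMeasurable (fun p : ℂ × ℂ => g₂ p.1)
          ((volA.restrict uDisk).prod (jointMu q α φ ψ)) := hg₂.comp_fst
      have h2 : Measurable (S.indicator (fun _ => (1:ℝ≥0∞))) := measurable_const.indicator hS
      exact h1.mul h2.aemeasurable
    calc ∫⁻ ζ in uDisk, g₂ ζ * jointMu q α φ ψ (pDisk ζ r) ∂volA
        = ∫⁻ ζ in uDisk, ∫⁻ w, g₂ ζ * S.indicator (fun _ => (1:ℝ≥0∞)) (ζ, w)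
            ∂(jointMu q α φ ψ) ∂volA := by
          apply lintegral_congr
          intro ζ
          rw [← lintegral_indicator_one (hsec ζ)]
          rw [← lintegral_const_mul' _ _ (show g₂ ζ ≠ ⊤ from ENNReal.ofReal_ne_top)]
          apply lintegral_congr
          intro w
          rw [hind ζ w]
          rfl
      _ = ∫⁻ w, ∫⁻ ζ in uDisk, g₂ ζ * S.indicator (fun _ => (1:ℝ≥0∞)) (ζ, w)
            ∂volA ∂(jointMu q α φ ψ) := lintegral_lintegral_swap hmeas
      _ = ∫⁻ w, ∫⁻ ζ in uDisk, g₂ ζ * (pDisk ζ r).indicator (fun _ => (1:ℝ≥0∞)) w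
            ∂volA ∂(jointMu q α φ ψ) := by
          apply lintegral_congr
          intro w
          apply lintegral_congr
          intro ζ
          rw [hind ζ w]
  have hptw : ∀ᵐ w ∂(jointMu q α φ ψ),
      C⁻¹ * ENNReal.ofReal (Norm.norm (deriv f w) ^ q) ≤
        ∫⁻ ζ in uDisk, g₂ ζ * (pDisk ζ r).indicator (fun _ => (1:ℝ≥0∞)) w ∂volA := by
    filter_upwards [hae] with w hw
    have hpw := pointwise q r hq hr0 hr1 f hf w hw
    calc C⁻¹ * ENNReal.ofReal (Norm.norm (deriv f w) ^ q)
        ≤ C⁻¹ * (C * ∫⁻ ζ in uDisk, g₂ ζ *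
            (pDisk ζ r).indicator (fun _ => (1:ℝ≥0∞)) w ∂volA) := mul_le_mul_right hpw _
      _ = _ := by rw [← mul_assoc, ENNReal.inv_mul_cancel hC0 hCt, one_mul]
  have hfin : C⁻¹ * (∫⁻ z, ENNReal.ofReal (Norm.norm (deriv f z) ^ q) ∂jointMu q α φ ψ)
      ≤ ∫⁻ ζ in uDisk, g₂ ζ * jointMu q α φ ψ (pDisk ζ r) ∂volA := by
    rw [hswap, ← lintegral_const_mul' _ _ (ENNReal.inv_ne_top.mpr hC0)]
    exact lintegral_mono_ae hptw
  calc (∫⁻ z, ENNReal.ofReal (Norm.norm (deriv f z) ^ q) ∂jointMu q α φ ψ)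
      = C * (C⁻¹ * (∫⁻ z, ENNReal.ofReal (Norm.norm (deriv f z) ^ q) ∂jointMu q α φ ψ)) := by
        rw [← mul_assoc, ENNReal.mul_inv_cancel hC0 hCt, one_mul]
    _ ≤ C * ∫⁻ ζ in uDisk, g₂ ζ * jointMu q α φ ψ (pDisk ζ r) ∂volA := mul_le_mul_right hfin _

end
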